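/- Let n ≥ 1 and let A be an n×n real matrix all of whose entries are strictly positive. Then there exists a real number λ₁ > 0 such that λ₁ is an eigenvalue of A (i.e. there is a nonzero vector v with A·v = λ₁·v) and λ₁ is a simple root of the characteristic polynomial of A. -/

import Mathlib

open Matrix Polynomial

section PFaux

lemma mulVec_apply_sum {n : ℕ} (A : Matrix (Fin n) (Fin n) ℝ) (v : Fin n → ℝ) (i : Fin n) :
    A.mulVec v i = ∑ j, A i j * v j := rfl

/-- positivity of `A.mulVec v` at `i` when `v ≥ 0` and some coordinate positive. -/
lemma mulVec_pos {n : ℕ} (A : Matrix (Fin n) (Fin n) ℝ) (hA : ∀ i j, 0 < A i j)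
    (v : Fin n → ℝ) (hv : ∀ j, 0 ≤ v j) (j₀ : Fin n) (hj₀ : 0 < v j₀) (i : Fin n) :
    0 < A.mulVec v i := by
  rw [mulVec_apply_sum]
  have h1 : 0 < A i j₀ * v j₀ := mul_pos (hA i j₀) hj₀
  have h2 : ∀ j ∈ Finset.univ, j ≠ j₀ → 0 ≤ A i j * v j :=
    fun j _ _ => mul_nonneg (hA i j).le (hv j)
  calc 0 < A i j₀ * v j₀ := h1
    _ ≤ ∑ j, A i j * v j := Finset.single_le_sum (f := fun j => A i j * v j)
        (fun j _ => mul_nonneg (hA i j).le (hv j)) (Finset.mem_univ j₀)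

lemma perron_exists {n : ℕ} (hn : 1 ≤ n) (A : Matrix (Fin n) (Fin n) ℝ)
    (hA : ∀ i j, 0 < A i j) :
    ∃ lam : ℝ, 0 < lam ∧ ∃ u : Fin n → ℝ, (∀ i, 0 < u i) ∧ A.mulVec u = lam • u := by
  have i0 : Fin n := ⟨0, hn⟩
  have hvu : (Finset.univ : Finset (Fin n)).Nonempty := ⟨i0, Finset.mem_univ i0⟩
  set M : ℝ := ∑ i, ∑ j, A i j with hM
  set K : Set (Fin n → ℝ) := {v | (∀ i, 0 ≤ v i) ∧ ∑ i, v i = 1} with hK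
  -- any v ∈ K has a positive coordinate
  have hKpos : ∀ v ∈ K, ∃ j, 0 < v j := by
    rintro v ⟨hv0, hv1⟩
    by_contra h
    push_neg at h
    have : ∑ i, v i = 0 := Finset.sum_eq_zero (fun i _ => le_antisymm (h i) (hv0 i))
    rw [hv1] at this; norm_num at this
  -- row sums bounded by M
  have hrow : ∀ i, ∑ j, A i j ≤ M :=
    fun i => Finset.single_le_sum (f := fun i => ∑ j, A i j)
      (fun i _ => Finset.sum_nonneg fun j _ => (hA i j).le) (Finset.mem_univ i)
  -- bound: any admissible lambda is ≤ M
  have hbound : ∀ (μ : ℝ) (v : Fin n → ℝ), v ∈ K → (∀ i, μ * v i ≤ A.mulVec v i) → μ ≤ M := by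
    rintro μ v ⟨hv0, hv1⟩ hineq
    obtain ⟨i₂, -, hi₂⟩ := Finset.exists_max_image Finset.univ v hvu
    have hvpos : 0 < v i₂ := by
      obtain ⟨j, hj⟩ := hKpos v ⟨hv0, hv1⟩
      exact lt_of_lt_of_le hj (hi₂ j (Finset.mem_univ j))
    have h1 : μ * v i₂ ≤ (∑ j, A i₂ j) * v i₂ := by
      calc μ * v i₂ ≤ A.mulVec v i₂ := hineq i₂
        _ = ∑ j, A i₂ j * v j := mulVec_apply_sum ..
        _ ≤ ∑ j, A i₂ j * v i₂ := Finset.sum_le_sum fun j _ =>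
              mul_le_mul_of_nonneg_left (hi₂ j (Finset.mem_univ j)) (hA i₂ j).le
        _ = (∑ j, A i₂ j) * v i₂ := (Finset.sum_mul ..).symm
    have h2 := le_of_mul_le_mul_right (h1.trans (mul_le_mul_of_nonneg_right (hrow i₂) hvpos.le)) hvpos
    exact h2
  -- the compact constraint set
  set C : Set (ℝ × (Fin n → ℝ)) :=
    {p | p.1 ∈ Set.Icc (0:ℝ) M ∧ p.2 ∈ K ∧ ∀ i, p.1 * p.2 i ≤ A.mulVec p.2 i} with hC
  have hKclosed : IsClosed K := by
    have h1 : IsClosed {v : Fin n → ℝ | ∀ i, 0 ≤ v i} := by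
      have : {v : Fin n → ℝ | ∀ i, 0 ≤ v i} = ⋂ i, {v | 0 ≤ v i} := by
        ext v; simp
      rw [this]
      exact isClosed_iInter fun i => isClosed_le continuous_const (continuous_apply i)
    have h2 : IsClosed {v : Fin n → ℝ | ∑ i, v i = 1} :=
      isClosed_eq (continuous_finset_sum _ fun i _ => continuous_apply i) continuous_const
    exact h1.inter h2
  have hCclosed : IsClosed C := by
    have h1 : IsClosed {p : ℝ × (Fin n → ℝ) | p.1 ∈ Set.Icc (0:ℝ) M} :=
      isClosed_Icc.preimage continuous_fst
    have h2 : IsClosed {p : ℝ × (Fin n → ℝ) | p.2 ∈ K} := hKclosed.preimage continuous_snd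
    have h3 : IsClosed {p : ℝ × (Fin n → ℝ) | ∀ i, p.1 * p.2 i ≤ A.mulVec p.2 i} := by
      have : {p : ℝ × (Fin n → ℝ) | ∀ i, p.1 * p.2 i ≤ A.mulVec p.2 i}
          = ⋂ i, {p : ℝ × (Fin n → ℝ) | p.1 * p.2 i ≤ A.mulVec p.2 i} := by
        ext p; simp
      rw [this]
      refine isClosed_iInter fun i => isClosed_le ?_ ?_
      · exact continuous_fst.mul ((continuous_apply i).comp continuous_snd)
      · have : Continuous fun p : ℝ × (Fin n → ℝ) => ∑ j, A i j * p.2 j :=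
          continuous_finset_sum _ fun j _ =>
            continuous_const.mul ((continuous_apply j).comp continuous_snd)
        simpa [mulVec_apply_sum] using this
    have : C = ({p : ℝ × (Fin n → ℝ) | p.1 ∈ Set.Icc (0:ℝ) M} ∩ {p | p.2 ∈ K})
        ∩ {p | ∀ i, p.1 * p.2 i ≤ A.mulVec p.2 i} := by
      ext p; simp only [hC, Set.mem_setOf_eq, Set.mem_inter_iff, and_assoc]
    rw [this]
    exact (h1.inter h2).inter h3
  have hCcompact : IsCompact C := by
    have hsub : C ⊆ Set.Icc (0:ℝ) M ×ˢ Set.pi Set.univ (fun _ : Fin n => Set.Icc (0:ℝ) 1) := by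
      rintro ⟨μ, v⟩ ⟨h1, ⟨hv0, hv1⟩, -⟩
      refine ⟨h1, fun i _ => ⟨hv0 i, ?_⟩⟩
      calc v i ≤ ∑ j, v j := Finset.single_le_sum (fun j _ => hv0 j) (Finset.mem_univ i)
        _ = 1 := hv1
    exact (isCompact_Icc.prod (isCompact_univ_pi fun _ => isCompact_Icc)).of_isClosed_subset
      hCclosed hsub
  -- C is nonempty, with first coordinate ≥ lam₀ > 0
  obtain ⟨iₘ, -, hiₘ⟩ := Finset.exists_min_image Finset.univ (fun i => ∑ j, A i j) hvu
  set lam₀ : ℝ := ∑ j, A iₘ j with hlam₀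
  have hlam₀pos : 0 < lam₀ := Finset.sum_pos (fun j _ => hA iₘ j) hvu
  have hmem₀ : ((lam₀, fun _ => (n:ℝ)⁻¹) : ℝ × (Fin n → ℝ)) ∈ C := by
    have hn0 : (0:ℝ) < n := by exact_mod_cast hn
    have hKmem : (fun _ => (n:ℝ)⁻¹ : Fin n → ℝ) ∈ K := by
      constructor
      · intro i; positivity
      · simp [Finset.card_univ]
        field_simp
    refine ⟨⟨hlam₀pos.le, ?_⟩, hKmem, ?_⟩
    · calc lam₀ ≤ ∑ j, A iₘ j := le_refl _
        _ ≤ M := hrow iₘ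
    · intro i
      rw [mulVec_apply_sum]
      have : lam₀ ≤ ∑ j, A i j := hiₘ i (Finset.mem_univ i)
      calc lam₀ * (n:ℝ)⁻¹ ≤ (∑ j, A i j) * (n:ℝ)⁻¹ :=
            mul_le_mul_of_nonneg_right this (by positivity)
        _ = ∑ j, A i j * (n:ℝ)⁻¹ := Finset.sum_mul ..
  obtain ⟨⟨lam, u⟩, hmemC, hmax⟩ :=
    hCcompact.exists_isMaxOn ⟨_, hmem₀⟩ (continuous_fst.continuousOn)
  obtain ⟨⟨hlam0, hlamM⟩, huK, hineq⟩ := hmemC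
  have hlampos : 0 < lam := lt_of_lt_of_le hlam₀pos (hmax hmem₀)
  -- A u = lam • u
  have heig : A.mulVec u = lam • u := by
    by_contra hne
    set d : Fin n → ℝ := A.mulVec u - lam • u with hd
    have hd0 : ∀ i, 0 ≤ d i := fun i => by
      simp only [hd, Pi.sub_apply, Pi.smul_apply, smul_eq_mul, sub_nonneg]
      exact hineq i
    have hdne : ∃ j₀, 0 < d j₀ := by
      by_contra h
      push_neg at h
      apply hne
      have : d = 0 := funext fun i => le_antisymm (h i) (hd0 i)
      have := sub_eq_zero.mp this
      exact this
    obtain ⟨j₀, hj₀⟩ := hdne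
    obtain ⟨jᵤ, hjᵤ⟩ := hKpos u huK
    set y : Fin n → ℝ := A.mulVec u with hy
    have hypos : ∀ i, 0 < y i := mulVec_pos A hA u huK.1 jᵤ hjᵤ
    have hAdpos : ∀ i, 0 < A.mulVec d i := mulVec_pos A hA d hd0 j₀ hj₀
    have hAy : ∀ i, A.mulVec y i = lam * y i + A.mulVec d i := by
      intro i
      have h0 : y = lam • u + d := by simp [hd]
      calc A.mulVec y i = A.mulVec (lam • u + d) i := by rw [← h0]
        _ = lam * A.mulVec u i + A.mulVec d i := by
            rw [Matrix.mulVec_add, Matrix.mulVec_smul]; simp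
        _ = lam * y i + A.mulVec d i := rfl
    obtain ⟨i₁, -, hi₁⟩ := Finset.exists_min_image Finset.univ
      (fun i => A.mulVec d i / y i) hvu
    set ε : ℝ := A.mulVec d i₁ / y i₁ with hε
    have hεpos : 0 < ε := div_pos (hAdpos i₁) (hypos i₁)
    have hkey : ∀ i, (lam + ε) * y i ≤ A.mulVec y i := by
      intro i
      rw [hAy i, add_mul]
      have h1 : ε * y i ≤ A.mulVec d i := by
        have h2 : ε ≤ A.mulVec d i / y i := hi₁ i (Finset.mem_univ i)
        calc ε * y i ≤ (A.mulVec d i / y i) * y i :=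
              mul_le_mul_of_nonneg_right h2 (hypos i).le
          _ = A.mulVec d i := div_mul_cancel₀ _ (hypos i).ne'
      linarith
    set s : ℝ := ∑ i, y i with hs
    have hspos : 0 < s := Finset.sum_pos (fun i _ => hypos i) hvu
    set v : Fin n → ℝ := s⁻¹ • y with hv
    have hvK : v ∈ K := by
      constructor
      · intro i; exact mul_nonneg (inv_nonneg.mpr hspos.le) (hypos i).le
      · simp only [hv, Pi.smul_apply, smul_eq_mul, ← Finset.mul_sum, ← hs]
        field_simp
    have hvineq : ∀ i, (lam + ε) * v i ≤ A.mulVec v i := by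
      intro i
      have : A.mulVec v i = s⁻¹ * A.mulVec y i := by
        rw [hv, Matrix.mulVec_smul]; simp
      rw [this]
      have := hkey i
      have hv_i : v i = s⁻¹ * y i := rfl
      rw [hv_i]
      calc (lam + ε) * (s⁻¹ * y i) = s⁻¹ * ((lam + ε) * y i) := by ring
        _ ≤ s⁻¹ * A.mulVec y i :=
            mul_le_mul_of_nonneg_left (hkey i) (inv_nonneg.mpr hspos.le)
    have hvC : ((lam + ε, v) : ℝ × (Fin n → ℝ)) ∈ C :=
      ⟨⟨by positivity, hbound _ v hvK hvineq⟩, hvK, hvineq⟩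
    have h' : lam + ε ≤ lam := hmax hvC
    linarith
  refine ⟨lam, hlampos, u, ?_, heig⟩
  intro i
  obtain ⟨jᵤ, hjᵤ⟩ := hKpos u huK
  have h1 : 0 < A.mulVec u i := mulVec_pos A hA u huK.1 jᵤ hjᵤ i
  rw [heig] at h1
  simp only [Pi.smul_apply, smul_eq_mul] at h1
  by_contra h
  push_neg at h
  nlinarith


/-- Shift of the characteristic polynomial. -/
lemma charpoly_sub_smul_one {n : ℕ} (A : Matrix (Fin n) (Fin n) ℝ) (lam : ℝ) :
    (A - lam • (1 : Matrix (Fin n) (Fin n) ℝ)).charpoly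
      = A.charpoly.comp (X + C lam) := by
  have hcomp : ∀ p : ℝ[X], p.comp (X + C lam) = (aeval (X + C lam) : ℝ[X] →ₐ[ℝ] ℝ[X]) p := by
    intro p
    rw [aeval_def, eval₂_eq_eval_map]
    simp [Polynomial.comp, eval₂_eq_eval_map]
  rw [hcomp]
  unfold Matrix.charpoly
  rw [AlgHom.map_det]
  congr 1
  ext i j
  by_cases h : i = j
  · subst h
    simp [Matrix.charmatrix_apply_eq, Matrix.map_apply, Matrix.sub_apply, Matrix.smul_apply,
      Matrix.one_apply_eq]
    ring
  · simp [Matrix.charmatrix_apply_ne _ _ _ h, Matrix.map_apply, Matrix.sub_apply,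
      Matrix.smul_apply, Matrix.one_apply_ne h]

end PFaux

/-- Perron–Frobenius: a strictly positive real `n × n` matrix (with `n ≥ 1`) has a
positive eigenvalue `λ₁` (admitting a nonzero eigenvector) which is a simple root of
its characteristic polynomial. -/
theorem positive_matrix_has_simple_positive_eigenvalue
    (n : ℕ) (hn : 1 ≤ n) (A : Matrix (Fin n) (Fin n) ℝ)
    (hA : ∀ i j, 0 < A i j) :
    ∃ lam : ℝ, 0 < lam ∧
      (∃ v : Fin n → ℝ, v ≠ 0 ∧ A.mulVec v = lam • v) ∧
      (Matrix.charpoly A).rootMultiplicity lam = 1 := by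
  obtain ⟨lam, hlam, u, hu, hAu⟩ := perron_exists hn A hA
  obtain ⟨mu, hmu, w, hw, hAw⟩ := perron_exists hn Aᵀ (fun i j => hA j i)
  have huneq : u ≠ 0 := by
    intro h
    have := hu ⟨0, hn⟩
    rw [h] at this
    simp at this
  refine ⟨lam, hlam, ⟨u, huneq, hAu⟩, ?_⟩
  have i0 : Fin n := ⟨0, hn⟩
  have hvu : (Finset.univ : Finset (Fin n)).Nonempty := ⟨i0, Finset.mem_univ i0⟩
  have hune : u ≠ 0 := by
    intro h
    have := hu i0
    rw [h] at this
    simp at this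
  have hwu : 0 < w ⬝ᵥ u := Finset.sum_pos (fun i _ => mul_pos (hw i) (hu i)) hvu
  have hdotA : ∀ x, w ⬝ᵥ A.mulVec x = mu * (w ⬝ᵥ x) := by
    intro x
    rw [Matrix.dotProduct_mulVec, ← Matrix.mulVec_transpose, hAw, smul_dotProduct]
    simp
  have hmueq : mu = lam := by
    have h1 : w ⬝ᵥ A.mulVec u = lam * (w ⬝ᵥ u) := by
      rw [hAu, dotProduct_smul]; simp
    have h2 := hdotA u
    rw [h1] at h2
    exact mul_right_cancel₀ hwu.ne' h2.symm
  set B := A - lam • (1 : Matrix (Fin n) (Fin n) ℝ) with hB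
  have hBmul : ∀ x, B.mulVec x = A.mulVec x - lam • x := by
    intro x
    rw [hB, Matrix.sub_mulVec, Matrix.smul_mulVec, Matrix.one_mulVec]
  have hwB : ∀ x, w ⬝ᵥ B.mulVec x = 0 := by
    intro x
    rw [hBmul, dotProduct_sub, hdotA, hmueq, dotProduct_smul]
    simp
  have hBu : B.mulVec u = 0 := by rw [hBmul, hAu]; simp
  -- geometric simplicity
  have hgeo : ∀ x : Fin n → ℝ, B.mulVec x = 0 → ∃ c : ℝ, x = c • u := by
    intro x hx
    have hAx : A.mulVec x = lam • x := by
      have := hBmul x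
      rw [hx] at this
      have := sub_eq_zero.mp this.symm
      exact this
    obtain ⟨i₁, -, hi₁⟩ := Finset.exists_min_image Finset.univ (fun i => x i / u i) hvu
    set t : ℝ := x i₁ / u i₁ with ht
    set z : Fin n → ℝ := x - t • u with hz
    refine ⟨t, ?_⟩
    have hz0 : ∀ i, 0 ≤ z i := by
      intro i
      have h1 : t ≤ x i / u i := hi₁ i (Finset.mem_univ i)
      have h2 : t * u i ≤ x i := by
        rw [← le_div_iff₀ (hu i)] at *
        exact h1
      simp only [hz, Pi.sub_apply, Pi.smul_apply, smul_eq_mul, sub_nonneg]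
      exact h2
    have hzi₁ : z i₁ = 0 := by
      simp only [hz, Pi.sub_apply, Pi.smul_apply, smul_eq_mul, ht]
      rw [div_mul_cancel₀ _ (hu i₁).ne', sub_self]
    have hAz : A.mulVec z = lam • z := by
      rw [hz, Matrix.mulVec_sub, Matrix.mulVec_smul, hAx, hAu, smul_comm, ← smul_sub]
    by_cases hzz : z = 0
    · rw [sub_eq_zero] at hzz
      exact hzz
    · exfalso
      have : ∃ j, 0 < z j := by
        by_contra h
        push_neg at h
        exact hzz (funext fun i => le_antisymm (h i) (hz0 i))
      obtain ⟨j, hj⟩ := this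
      have hpos : 0 < A.mulVec z i₁ := mulVec_pos A hA z hz0 j hj i₁
      rw [hAz] at hpos
      simp only [Pi.smul_apply, smul_eq_mul, hzi₁, mul_zero] at hpos
      exact lt_irrefl 0 hpos
  set φ : Module.End ℝ (Fin n → ℝ) := Matrix.mulVecLin B with hφ
  have hφapp : ∀ x, φ x = B.mulVec x := fun x => rfl
  have hker : LinearMap.ker φ = Submodule.span ℝ {u} := by
    ext x
    rw [LinearMap.mem_ker, Submodule.mem_span_singleton]
    constructor
    · intro hx
      obtain ⟨c, hc⟩ := hgeo x (by rw [← hφapp]; exact hx)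
      exact ⟨c, hc.symm⟩
    · rintro ⟨c, rfl⟩
      rw [hφapp, Matrix.mulVec_smul, hBu]
      simp
  have hk2 : ∀ x, φ (φ x) = 0 → φ x = 0 := by
    intro x hxx
    have h1 : φ x ∈ LinearMap.ker φ := LinearMap.mem_ker.mpr hxx
    rw [hker, Submodule.mem_span_singleton] at h1
    obtain ⟨c, hc⟩ := h1
    have h0 : w ⬝ᵥ (c • u) = 0 := by rw [hc, hφapp]; exact hwB x
    rw [dotProduct_smul] at h0
    have hc0 : c = 0 := by
      simp only [smul_eq_mul] at h0
      rcases mul_eq_zero.mp h0 with h | h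
      · exact h
      · exact absurd h hwu.ne'
    rw [← hc, hc0, zero_smul]
  have hkpow : ∀ k (x : Fin n → ℝ), (φ ^ (k+1)) x = 0 → φ x = 0 := by
    intro k
    induction k with
    | zero => intro x h; simpa using h
    | succ k ih =>
      intro x h
      have h2 : (φ ^ (k+1)) (φ x) = 0 := by
        rw [← Module.End.mul_apply, ← pow_succ]
        exact h
      exact hk2 x (ih (φ x) h2)
  have hgen : φ.maxGenEigenspace 0 = Submodule.span ℝ {u} := by
    ext x
    rw [Module.End.mem_maxGenEigenspace]
    simp only [zero_smul, sub_zero]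
    constructor
    · rintro ⟨k, hk⟩
      rcases k with _ | k
      · simp only [pow_zero, Module.End.one_apply] at hk
        rw [hk]; exact Submodule.zero_mem _
      · have := hkpow k x hk
        have hx : x ∈ LinearMap.ker φ := LinearMap.mem_ker.mpr this
        rwa [hker] at hx
    · intro hx
      refine ⟨1, ?_⟩
      rw [pow_one]
      have : x ∈ LinearMap.ker φ := by rw [hker]; exact hx
      exact LinearMap.mem_ker.mp this
  have hφc : φ.charpoly = B.charpoly := by
    have hmat : LinearMap.toMatrix' φ = B := by
      rw [hφ, ← Matrix.toLin'_apply', LinearMap.toMatrix'_toLin']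
    rw [← LinearMap.charpoly_toMatrix φ (Pi.basisFun ℝ (Fin n)),
      LinearMap.toMatrix_eq_toMatrix', hmat]
  rw [Polynomial.rootMultiplicity_eq_natTrailingDegree, ← charpoly_sub_smul_one A lam, ← hB,
    ← hφc, ← LinearMap.finrank_maxGenEigenspace_zero_eq φ, hgen]
  exact finrank_span_singleton hune
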